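/- Let s satisfy s''(t) = 6 s(t)^2 + 6 t on I ∋ 0 with s(0) = s'(0) = 0, and let τ > 0 be in I. Then every t in I with t > τ satisfies t < τ + s(τ)^{-1/2}; that is, τ + s(τ)^{-1/2} does not lie in I. -/

import Mathlib

open Set

theorem painleve_blowup_upper_bound
    (s : ℝ → ℝ) (a b : ℝ) (ha : a < 0) (hb : 0 < b)
    (hdiff : ∀ t ∈ Ioo a b, DifferentiableAt ℝ s t ∧ DifferentiableAt ℝ (deriv s) t)
    (heq : ∀ t ∈ Ioo a b, deriv (deriv s) t = 6 * (s t) ^ 2 + 6 * t)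
    (h0 : s 0 = 0) (h0' : deriv s 0 = 0)
    (τ : ℝ) (hτ : τ ∈ Ioo a b) (hτpos : 0 < τ) :
    (∀ t ∈ Ioo a b, τ < t → t < τ + (s τ) ^ (-(1 : ℝ) / 2)) ∧
    τ + (s τ) ^ (-(1 : ℝ) / 2) ∉ Ioo a b := by
  have hsub : ∀ x ∈ Ioo (0:ℝ) b, Icc (0:ℝ) x ⊆ Ioo a b := by
    intro x hx y hy
    exact ⟨lt_of_lt_of_le ha hy.1, lt_of_le_of_lt hy.2 hx.2⟩
  -- deriv s positive on (0,b)
  have hds_pos : ∀ x ∈ Ioo (0:ℝ) b, 0 < deriv s x := by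
    intro x hx
    have hmono : StrictMonoOn (deriv s) (Icc 0 x) := by
      apply strictMonoOn_of_deriv_pos (convex_Icc 0 x)
      · intro y hy
        exact ((hdiff y (hsub x hx hy)).2.continuousAt).continuousWithinAt
      · intro y hy
        rw [interior_Icc] at hy
        have hyI : y ∈ Ioo a b := hsub x hx (Ioo_subset_Icc_self hy)
        rw [heq y hyI]
        nlinarith [sq_nonneg (s y), hy.1]
    have h := hmono (left_mem_Icc.2 hx.1.le) (right_mem_Icc.2 hx.1.le) hx.1
    rwa [h0'] at h
  -- s positive on (0,b)
  have hs_pos : ∀ x ∈ Ioo (0:ℝ) b, 0 < s x := by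
    intro x hx
    have hmono : StrictMonoOn s (Icc 0 x) := by
      apply strictMonoOn_of_deriv_pos (convex_Icc 0 x)
      · intro y hy
        exact ((hdiff y (hsub x hx hy)).1.continuousAt).continuousWithinAt
      · intro y hy
        rw [interior_Icc] at hy
        exact hds_pos y ⟨hy.1, lt_trans hy.2 hx.2⟩
    have h := hmono (left_mem_Icc.2 hx.1.le) (right_mem_Icc.2 hx.1.le) hx.1
    rwa [h0] at h
  -- energy: (s')^2 > 4 s^3 on (0,b)
  have hEderiv : ∀ y ∈ Ioo a b,
      HasDerivAt (fun t => (deriv s t)^2 - 4*(s t)^3) (12 * y * deriv s y) y := by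
    intro y hy
    have h1 : HasDerivAt s (deriv s y) y := (hdiff y hy).1.hasDerivAt
    have h2 : HasDerivAt (deriv s) (deriv (deriv s) y) y := (hdiff y hy).2.hasDerivAt
    have h3 : HasDerivAt (fun t => (deriv s t)^2 - 4*(s t)^3)
        (((2:ℕ):ℝ) * deriv s y ^ (2 - 1) * deriv (deriv s) y
          - 4 * (((3:ℕ):ℝ) * s y ^ (3 - 1) * deriv s y)) y :=
      (h2.pow 2).sub ((h1.pow 3).const_mul 4)
    convert h3 using 1
    rw [heq y hy]; ring
  have henergy : ∀ x ∈ Ioo (0:ℝ) b, 4 * (s x)^3 < (deriv s x)^2 := by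
    intro x hx
    have hmono : StrictMonoOn (fun t => (deriv s t)^2 - 4*(s t)^3) (Icc 0 x) := by
      apply strictMonoOn_of_deriv_pos (convex_Icc 0 x)
      · intro y hy
        exact (hEderiv y (hsub x hx hy)).differentiableAt.continuousAt.continuousWithinAt
      · intro y hy
        rw [interior_Icc] at hy
        have hyI : y ∈ Ioo a b := hsub x hx (Ioo_subset_Icc_self hy)
        rw [(hEderiv y hyI).deriv]
        have hd := hds_pos y ⟨hy.1, lt_trans hy.2 hx.2⟩
        have := hy.1
        positivity
    have h := hmono (left_mem_Icc.2 hx.1.le) (right_mem_Icc.2 hx.1.le) hx.1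
    simp only [h0, h0'] at h
    nlinarith [h]
  -- derivative of the comparison function G z = s z ^ (-1/2) + z is < 0 on (0,b)
  have hGderiv : ∀ y ∈ Ioo (0:ℝ) b,
      HasDerivAt (fun z => s z ^ (-(1:ℝ)/2) + z)
        (deriv s y * (-(1:ℝ)/2) * s y ^ (-(1:ℝ)/2 - 1) + 1) y := by
    intro y hy
    have hyI : y ∈ Ioo a b := ⟨lt_trans ha hy.1, hy.2⟩
    have h1 : HasDerivAt s (deriv s y) y := (hdiff y hyI).1.hasDerivAt
    exact (h1.rpow_const (Or.inl (hs_pos y hy).ne')).add (hasDerivAt_id y)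
  have hGneg : ∀ y ∈ Ioo (0:ℝ) b,
      deriv s y * (-(1:ℝ)/2) * s y ^ (-(1:ℝ)/2 - 1) + 1 < 0 := by
    intro y hy
    have hsy : 0 < s y := hs_pos y hy
    have hdy : 0 < deriv s y := hds_pos y hy
    have hA : 0 < s y ^ ((-3:ℝ)/2) := Real.rpow_pos_of_pos hsy _
    set c : ℝ := s y ^ ((-3:ℝ)/2) * deriv s y with hc
    have hcpos : 0 < c := mul_pos hA hdy
    have hsq : (s y ^ ((-3:ℝ)/2))^2 = s y ^ (-3:ℝ) := by
      rw [← Real.rpow_natCast (s y ^ ((-3:ℝ)/2)) 2, ← Real.rpow_mul hsy.le]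
      norm_num
    have hinv : s y ^ (-3:ℝ) * (s y)^3 = 1 := by
      rw [← Real.rpow_natCast (s y) 3, ← Real.rpow_add hsy]
      norm_num
    have hc2 : 4 < c^2 := by
      have hE := henergy y hy
      have h1 : c^2 = s y ^ (-3:ℝ) * (deriv s y)^2 := by
        rw [hc, mul_pow, hsq]
      have h2 : s y ^ (-3:ℝ) * (4 * (s y)^3) < s y ^ (-3:ℝ) * (deriv s y)^2 := by
        apply mul_lt_mul_of_pos_left hE (Real.rpow_pos_of_pos hsy _)
      calc (4:ℝ) = s y ^ (-3:ℝ) * (4 * (s y)^3) := by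
              rw [show s y ^ (-3:ℝ) * (4 * (s y)^3) = 4 * (s y ^ (-3:ℝ) * (s y)^3) by ring,
                hinv]; ring
        _ < s y ^ (-3:ℝ) * (deriv s y)^2 := h2
        _ = c^2 := h1.symm
    have hc2' : 2 < c := by nlinarith
    have hexp : (-(1:ℝ)/2 - 1) = (-3:ℝ)/2 := by norm_num
    rw [hexp]
    have : deriv s y * (-(1:ℝ)/2) * s y ^ ((-3:ℝ)/2) = -(1/2) * c := by
      rw [hc]; ring
    rw [this]
    linarith
  have main : ∀ t ∈ Ioo a b, τ < t → t < τ + (s τ) ^ (-(1 : ℝ) / 2) := by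
    intro t ht hτt
    have htb : t ∈ Ioo (0:ℝ) b := ⟨lt_trans hτpos hτt, ht.2⟩
    have hsubτ : Icc τ t ⊆ Ioo (0:ℝ) b := fun y hy =>
      ⟨lt_of_lt_of_le hτpos hy.1, lt_of_le_of_lt hy.2 ht.2⟩
    have hanti : StrictAntiOn (fun z => s z ^ (-(1:ℝ)/2) + z) (Icc τ t) := by
      apply strictAntiOn_of_deriv_neg (convex_Icc τ t)
      · intro y hy
        exact (hGderiv y (hsubτ hy)).differentiableAt.continuousAt.continuousWithinAt
      · intro y hy
        rw [interior_Icc] at hy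
        have hy' : y ∈ Ioo (0:ℝ) b := hsubτ (Ioo_subset_Icc_self hy)
        rw [(hGderiv y hy').deriv]
        exact hGneg y hy'
    have h := hanti (left_mem_Icc.2 hτt.le) (right_mem_Icc.2 hτt.le) hτt
    have hst : 0 < s t ^ (-(1:ℝ)/2) := Real.rpow_pos_of_pos (hs_pos t htb) _
    simp only at h
    linarith
  refine ⟨main, ?_⟩
  intro hmem
  have hsτ : 0 < s τ ^ (-(1:ℝ)/2) :=
    Real.rpow_pos_of_pos (hs_pos τ ⟨hτpos, hτ.2⟩) _
  have := main _ hmem (by linarith)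
  linarith
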